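/- Let α be an irrational real number. Then lim_{n→∞} (1/n) · Σ_{i=0}^{n−1} [iα] = 1/2, where [iα] = iα − ⌊iα⌋ is the fractional part of iα. -/

import Mathlib

open Filter

open MeasureTheory Set Complex Real

instance fact_zero_lt_one_real : Fact ((0:ℝ) < 1) := ⟨one_pos⟩

-- L1: averages of powers of a unit-norm z ≠ 1 tend to 0
lemma avg_pow_tendsto_zero {z : ℂ} (hz : ‖z‖ = 1) (h1 : z ≠ 1) :
    Tendsto (fun n : ℕ => (n : ℂ)⁻¹ * ∑ i ∈ Finset.range n, z ^ i) atTop (nhds 0) := by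
  have hz1 : z - 1 ≠ 0 := sub_ne_zero.mpr h1
  apply squeeze_zero_norm (a := fun n : ℕ => (2 / ‖z - 1‖) * (n : ℝ)⁻¹)
  · intro n
    rw [geom_sum_eq h1]
    have : ‖(n : ℂ)⁻¹ * ((z ^ n - 1) / (z - 1))‖
        = (n : ℝ)⁻¹ * (‖z ^ n - 1‖ / ‖z - 1‖) := by
      simp [norm_div]
    rw [this]
    have h2 : ‖z ^ n - 1‖ ≤ 2 := by
      calc ‖z ^ n - 1‖ ≤ ‖z ^ n‖ + ‖(1:ℂ)‖ :=
            norm_sub_le _ _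
      _ ≤ 2 := by rw [norm_pow, hz]; norm_num
    have : (n : ℝ)⁻¹ * (‖z ^ n - 1‖ / ‖z - 1‖)
        ≤ (n : ℝ)⁻¹ * (2 / ‖z - 1‖) := by
      apply mul_le_mul_of_nonneg_left _ (by positivity)
      gcongr
    linarith [this]
  · have := tendsto_inv_atTop_zero.comp (tendsto_natCast_atTop_atTop (R := ℝ))
    simpa using this.const_mul (2 / ‖z - 1‖)

lemma fourier_nat_mul (k : ℤ) (i : ℕ) (α : ℝ) :
    (fourier k (((i : ℝ) * α : ℝ) : AddCircle (1:ℝ)) : ℂ) = (fourier k ((α : ℝ) : AddCircle (1:ℝ)) : ℂ) ^ i := by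
  rw [fourier_coe_apply, fourier_coe_apply, ← Complex.exp_nat_mul]
  congr 1
  push_cast
  ring

lemma fourier_alpha_ne_one {α : ℝ} (hα : Irrational α) {k : ℤ} (hk : k ≠ 0) :
    (fourier k ((α : ℝ) : AddCircle (1:ℝ)) : ℂ) ≠ 1 := by
  rw [fourier_coe_apply]
  intro h
  rw [Complex.exp_eq_one_iff] at h
  obtain ⟨m, hm⟩ := h
  have hπ : (2 * (π:ℂ) * Complex.I) ≠ 0 := by
    simp [Real.pi_ne_zero, Complex.I_ne_zero]
  have : (k : ℂ) * (α : ℂ) = (m : ℂ) := by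
    field_simp at hm
    apply mul_left_cancel₀ hπ
    linear_combination (norm := (push_cast; ring)) (2 * (π:ℂ) * Complex.I) * hm
  have hreal : (k : ℝ) * α = (m : ℝ) := by exact_mod_cast this
  have : α = (m : ℝ) / (k : ℝ) := by
    field_simp at hreal ⊢
    linarith [hreal]
  exact (hα.ne_rat (m / k)) (by rw [this]; push_cast; ring)

lemma integral_fourier_eq_zero {k : ℤ} (hk : k ≠ 0) :
    (∫ z : AddCircle (1:ℝ), (fourier k z : ℂ)) = 0 := by
  rw [← AddCircle.intervalIntegral_preimage (1:ℝ) 0 (fun z => (fourier k z : ℂ))]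
  simp only [fourier_coe_apply]
  have hc : (2 * (π:ℂ) * Complex.I * k) ≠ 0 := by
    simp [Real.pi_ne_zero, Complex.I_ne_zero, hk]
  have : ∀ x : ℝ, Complex.exp (2 * π * Complex.I * k * x / (1:ℝ)) =
      Complex.exp ((2 * π * Complex.I * k) * x) := by
    intro x; congr 1; push_cast; ring
  rw [intervalIntegral.integral_congr (fun x _ => this x)]
  rw [integral_exp_mul_complex hc]
  have h1 : Complex.exp (2 * ↑π * Complex.I * ↑k * ((0:ℝ) + (1:ℝ) : ℝ)) = 1 := by
    norm_num
    rw [← Complex.exp_int_mul_two_pi_mul_I k]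
    congr 1; ring
  rw [h1]
  norm_num

noncomputable instance : IsProbabilityMeasure (volume : Measure (AddCircle (1:ℝ))) :=
  ⟨by simp [AddCircle.measure_univ]⟩

lemma cont_integrable (g : C(AddCircle (1:ℝ), ℂ)) : Integrable g :=
  (map_continuous g).integrable_of_hasCompactSupport (HasCompactSupport.of_compactSpace _)

lemma tendsto_avg_span {α : ℝ} (hα : Irrational α) (g : C(AddCircle (1:ℝ), ℂ))
    (hg : g ∈ Submodule.span ℂ (Set.range (@fourier 1))) :
    Tendsto (fun n : ℕ => (n : ℂ)⁻¹ * ∑ i ∈ Finset.range n, g (((i:ℝ) * α : ℝ) : AddCircle (1:ℝ)))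
      atTop (nhds (∫ z, g z)) := by
  induction hg using Submodule.span_induction with
  | mem x hx =>
    obtain ⟨k, rfl⟩ := hx
    by_cases hk : k = 0
    · subst hk
      have hev : ∀ᶠ n : ℕ in atTop,
          (n : ℂ)⁻¹ * ∑ i ∈ Finset.range n, (fourier 0 (((i:ℝ) * α : ℝ) : AddCircle (1:ℝ)) : ℂ)
            = ((1 : ℂ)) := by
        filter_upwards [eventually_ge_atTop 1] with n hn
        simp only [fourier_zero, Finset.sum_const, Finset.card_range, nsmul_eq_mul, mul_one]
        rw [inv_mul_cancel₀]
        exact_mod_cast Nat.one_le_iff_ne_zero.mp hn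
      rw [show (∫ z : AddCircle (1:ℝ), (fourier 0 z : ℂ)) = 1 by
        simp only [fourier_zero]; simp]
      exact Tendsto.congr' (hev.mono fun n h => h.symm) tendsto_const_nhds
    · have key : ∀ n : ℕ, ∑ i ∈ Finset.range n,
          (fourier k (((i:ℝ) * α : ℝ) : AddCircle (1:ℝ)) : ℂ)
            = ∑ i ∈ Finset.range n, (fourier k ((α : ℝ) : AddCircle (1:ℝ)) : ℂ) ^ i := by
        intro n; exact Finset.sum_congr rfl fun i _ => fourier_nat_mul k i α
      rw [integral_fourier_eq_zero hk]
      simp only [key]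
      refine avg_pow_tendsto_zero ?_ (fourier_alpha_ne_one hα hk)
      rw [fourier_apply]
      exact Circle.norm_coe _
  | zero => simp only [ContinuousMap.zero_apply, Finset.sum_const_zero, mul_zero,
      integral_zero]; exact tendsto_const_nhds
  | add x y hx hy ihx ihy =>
    have h := ihx.add ihy
    rw [← integral_add (cont_integrable x) (cont_integrable y)] at h
    simp only [ContinuousMap.add_apply]
    exact h.congr fun n => by rw [Finset.sum_add_distrib, mul_add]
  | smul c x hx ih =>
    have h := ih.const_mul c
    simp only [ContinuousMap.coe_smul, ContinuousMap.smul_apply, smul_eq_mul]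
    rw [← integral_const_mul] at h
    exact h.congr fun n => by rw [← Finset.mul_sum]; ring

lemma tendsto_avg_cont {α : ℝ} (hα : Irrational α) (g : C(AddCircle (1:ℝ), ℂ)) :
    Tendsto (fun n : ℕ => (n : ℂ)⁻¹ * ∑ i ∈ Finset.range n, g (((i:ℝ) * α : ℝ) : AddCircle (1:ℝ)))
      atTop (nhds (∫ z, g z)) := by
  rw [Metric.tendsto_atTop]
  intro ε hε
  -- find p in the span with dist g p < ε/4
  have hdense : g ∈ closure ((Submodule.span ℂ (Set.range (@fourier 1)) :
      Submodule ℂ C(AddCircle (1:ℝ), ℂ)) : Set C(AddCircle (1:ℝ), ℂ)) := by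
    have := span_fourier_closure_eq_top (T := 1)
    have hg : g ∈ (Submodule.span ℂ (Set.range (@fourier 1))).topologicalClosure := by
      rw [this]; trivial
    exact hg
  obtain ⟨p, hp_mem, hp_dist⟩ := Metric.mem_closure_iff.mp hdense (ε/4) (by linarith)
  obtain ⟨N, hN⟩ := (Metric.tendsto_atTop.mp (tendsto_avg_span hα p hp_mem)) (ε/4) (by linarith)
  refine ⟨max N 1, fun n hn => ?_⟩
  have hn1 : 1 ≤ n := le_trans (le_max_right N 1) hn
  have hnN : N ≤ n := le_trans (le_max_left N 1) hn
  have hxd : ∀ x : AddCircle (1:ℝ), ‖g x - p x‖ ≤ ε/4 := fun x => by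
    rw [← dist_eq_norm]
    exact le_of_lt (lt_of_le_of_lt (ContinuousMap.dist_apply_le_dist x) hp_dist)
  have h1 : dist ((n : ℂ)⁻¹ * ∑ i ∈ Finset.range n, g (((i:ℝ) * α : ℝ) : AddCircle (1:ℝ)))
      ((n : ℂ)⁻¹ * ∑ i ∈ Finset.range n, p (((i:ℝ) * α : ℝ) : AddCircle (1:ℝ))) ≤ ε/4 := by
    rw [dist_eq_norm, ← mul_sub, ← Finset.sum_sub_distrib]
    calc ‖(n : ℂ)⁻¹ * ∑ i ∈ Finset.range n,
          (g (((i:ℝ) * α : ℝ) : AddCircle (1:ℝ)) - p (((i:ℝ) * α : ℝ) : AddCircle (1:ℝ)))‖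
        ≤ ‖(n : ℂ)⁻¹‖ * ∑ i ∈ Finset.range n, ‖g (((i:ℝ) * α : ℝ) : AddCircle (1:ℝ))
            - p (((i:ℝ) * α : ℝ) : AddCircle (1:ℝ))‖ := by
          rw [norm_mul]
          exact mul_le_mul_of_nonneg_left (norm_sum_le _ _) (norm_nonneg _)
      _ ≤ ‖(n : ℂ)⁻¹‖ * (n * (ε/4)) := by
          apply mul_le_mul_of_nonneg_left _ (norm_nonneg _)
          calc ∑ i ∈ Finset.range n, ‖g (((i:ℝ) * α : ℝ) : AddCircle (1:ℝ))
                - p (((i:ℝ) * α : ℝ) : AddCircle (1:ℝ))‖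
              ≤ ∑ _i ∈ Finset.range n, (ε/4) := Finset.sum_le_sum fun i _ => hxd _
            _ = n * (ε/4) := by rw [Finset.sum_const, Finset.card_range, nsmul_eq_mul]
      _ = ε/4 := by
          have hn0 : (n:ℝ) ≠ 0 := by positivity
          rw [norm_inv, Complex.norm_natCast]
          field_simp
  have h2 : dist ((n : ℂ)⁻¹ * ∑ i ∈ Finset.range n, p (((i:ℝ) * α : ℝ) : AddCircle (1:ℝ)))
      (∫ z, p z) < ε/4 := hN n hnN
  have h3 : dist (∫ z, p z) (∫ z, g z) ≤ ε/4 := by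
    rw [dist_eq_norm, ← integral_sub (cont_integrable p) (cont_integrable g)]
    calc ‖∫ z, (p z - g z)‖ ≤ (ε/4) * (volume (univ : Set (AddCircle (1:ℝ)))).toReal :=
          norm_integral_le_of_norm_le_const (Filter.Eventually.of_forall fun x => by
            rw [norm_sub_rev]; exact hxd x)
      _ = ε/4 := by simp
  have htri := dist_triangle4 ((n : ℂ)⁻¹ * ∑ i ∈ Finset.range n, g (((i:ℝ) * α : ℝ) : AddCircle (1:ℝ)))
    ((n : ℂ)⁻¹ * ∑ i ∈ Finset.range n, p (((i:ℝ) * α : ℝ) : AddCircle (1:ℝ))) (∫ z, p z) (∫ z, g z)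
  linarith

lemma tendsto_avg_cont_real {α : ℝ} (hα : Irrational α) (u : C(AddCircle (1:ℝ), ℝ)) :
    Tendsto (fun n : ℕ => (n : ℝ)⁻¹ * ∑ i ∈ Finset.range n, u (((i:ℝ) * α : ℝ) : AddCircle (1:ℝ)))
      atTop (nhds (∫ z, u z)) := by
  set g : C(AddCircle (1:ℝ), ℂ) := ⟨fun z => ((u z : ℝ) : ℂ), Complex.continuous_ofReal.comp (map_continuous u)⟩
  have h := (Complex.continuous_re.tendsto _).comp (tendsto_avg_cont hα g)
  have hint : (∫ z, g z) = ((∫ z, u z : ℝ) : ℂ) := integral_ofReal (f := fun z => u z) -- might need fix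
  rw [hint] at h
  simp only [Complex.ofReal_re] at h
  refine h.congr fun n => ?_
  show ((n : ℂ)⁻¹ * ∑ i ∈ Finset.range n, ((u (((i:ℝ) * α : ℝ) : AddCircle (1:ℝ)) : ℝ) : ℂ)).re = _
  push_cast
  rw [show ∑ i ∈ Finset.range n, ((u (((i:ℝ) * α : ℝ) : AddCircle (1:ℝ)) : ℝ) : ℂ)
      = ((∑ i ∈ Finset.range n, u (((i:ℝ) * α : ℝ) : AddCircle (1:ℝ)) : ℝ) : ℂ) by push_cast; rfl]
  rw [show ((n:ℂ))⁻¹ = (((n:ℝ)⁻¹ : ℝ) : ℂ) by push_cast; rfl]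
  rw [← Complex.ofReal_mul, Complex.ofReal_re]

lemma coe_fract_eq (x : ℝ) : ((Int.fract x : ℝ) : AddCircle (1:ℝ)) = (x : AddCircle (1:ℝ)) := by
  have : ((Int.fract x : ℝ) : AddCircle (1:ℝ)) - (x : AddCircle (1:ℝ))
      = ((Int.fract x - x : ℝ) : AddCircle (1:ℝ)) := by push_cast; rfl
  have h0 : ((Int.fract x - x : ℝ) : AddCircle (1:ℝ)) = 0 := by
    rw [AddCircle.coe_eq_zero_iff]
    exact ⟨-⌊x⌋, by rw [zsmul_eq_mul, Int.fract]; push_cast; ring⟩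
  have := this.trans h0
  linear_combination (norm := abel) this

lemma exists_upper {ε : ℝ} (h0 : 0 < ε) (h1 : ε ≤ 1) :
    ∃ H : C(AddCircle (1:ℝ), ℝ), (∀ x : ℝ, Int.fract x ≤ H ((x : ℝ) : AddCircle (1:ℝ)))
      ∧ (∫ z, H z) ≤ 1 / 2 + ε := by
  set f : ℝ → ℝ := fun x => max x (1 - x / ε) with hf
  have hcont : Continuous f := continuous_id.max (by continuity)
  have hend : f 0 = f 1 := by
    show max (0:ℝ) (1 - 0 / ε) = max 1 (1 - 1 / ε)
    rw [max_eq_right (by norm_num), max_eq_left]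
    · norm_num
    · have : (1:ℝ)/ε > 0 := by positivity
      linarith
  refine ⟨⟨AddCircle.liftIco 1 0 f, AddCircle.liftIco_zero_continuous hend hcont.continuousOn⟩,
    ?_, ?_⟩
  · intro x
    show Int.fract x ≤ AddCircle.liftIco 1 0 f ((x : ℝ) : AddCircle (1:ℝ))
    rw [← coe_fract_eq x, AddCircle.liftIco_zero_coe_apply ⟨Int.fract_nonneg x, Int.fract_lt_one x⟩]
    exact le_max_left _ _
  · show (∫ z, AddCircle.liftIco 1 0 f z) ≤ 1 / 2 + ε
    rw [← AddCircle.integral_preimage (1:ℝ) 0 _]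
    have hcongr : ∀ a ∈ Ioc (0:ℝ) (0+1), AddCircle.liftIco 1 0 f ((a:ℝ) : AddCircle (1:ℝ)) = f a := by
      intro a ha
      rcases eq_or_lt_of_le ha.2 with h | h
      · rw [(by norm_num : (0:ℝ)+1 = 1)] at h
        subst h
        have : ((1:ℝ) : AddCircle (1:ℝ)) = ((0:ℝ) : AddCircle (1:ℝ)) := by
          rw [show ((1:ℝ) : AddCircle (1:ℝ)) = (0 : AddCircle (1:ℝ)) by
            rw [AddCircle.coe_eq_zero_iff]; exact ⟨1, by simp⟩]
          simp
        rw [this, AddCircle.liftIco_zero_coe_apply ⟨le_refl 0, by norm_num⟩, hend]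
      · rw [AddCircle.liftIco_zero_coe_apply ⟨le_of_lt ha.1, by linarith⟩]
    rw [setIntegral_congr_fun measurableSet_Ioc hcongr]
    rw [← intervalIntegral.integral_of_le (by norm_num : (0:ℝ) ≤ 0+1)]
    rw [(by norm_num : (0:ℝ)+1 = 1)]
    rw [← intervalIntegral.integral_add_adjacent_intervals
      (hcont.intervalIntegrable 0 ε) (hcont.intervalIntegrable ε 1)]
    have hA : ∫ x in (0:ℝ)..ε, f x ≤ ∫ _x in (0:ℝ)..ε, (1:ℝ) := by
      apply intervalIntegral.integral_mono_on (le_of_lt h0) (hcont.intervalIntegrable 0 ε)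
        (intervalIntegrable_const)
      intro x hx
      apply max_le (by linarith [hx.2])
      have : x / ε ≥ 0 := div_nonneg hx.1 (le_of_lt h0)
      linarith
    have hB : ∫ x in ε..(1:ℝ), f x = ∫ x in ε..(1:ℝ), x := by
      apply intervalIntegral.integral_congr
      intro x hx
      rw [Set.uIcc_of_le h1] at hx
      apply max_eq_left
      have hx1 := hx.1
      have : x / ε ≥ 1 := (one_le_div h0).mpr hx1
      have hxnn : 0 ≤ x := le_trans (le_of_lt h0) hx1
      linarith
    rw [hB]
    have hid : ∫ x in ε..(1:ℝ), x = (1 - ε^2)/2 := by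
      rw [integral_id]; ring
    rw [hid]
    simp only [intervalIntegral.integral_const, smul_eq_mul, mul_one, sub_zero] at hA
    nlinarith [sq_nonneg ε]

lemma exists_lower {ε : ℝ} (h0 : 0 < ε) (h1 : ε ≤ 1) :
    ∃ G : C(AddCircle (1:ℝ), ℝ), (∀ x : ℝ, G ((x : ℝ) : AddCircle (1:ℝ)) ≤ Int.fract x)
      ∧ 1 / 2 - ε ≤ (∫ z, G z) := by
  set f : ℝ → ℝ := fun x => min x ((1 - x) / ε) with hf
  have hcont : Continuous f := continuous_id.min (by continuity)
  have hend : f 0 = f 1 := by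
    show min (0:ℝ) ((1 - 0) / ε) = min 1 ((1 - 1) / ε)
    rw [min_eq_left (by positivity), min_eq_right (by norm_num)]
    norm_num
  refine ⟨⟨AddCircle.liftIco 1 0 f, AddCircle.liftIco_zero_continuous hend hcont.continuousOn⟩,
    ?_, ?_⟩
  · intro x
    show AddCircle.liftIco 1 0 f ((x : ℝ) : AddCircle (1:ℝ)) ≤ Int.fract x
    rw [← coe_fract_eq x, AddCircle.liftIco_zero_coe_apply ⟨Int.fract_nonneg x, Int.fract_lt_one x⟩]
    exact min_le_left _ _
  · show 1 / 2 - ε ≤ (∫ z, AddCircle.liftIco 1 0 f z)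
    rw [← AddCircle.integral_preimage (1:ℝ) 0 _]
    have hcongr : ∀ a ∈ Ioc (0:ℝ) (0+1), AddCircle.liftIco 1 0 f ((a:ℝ) : AddCircle (1:ℝ)) = f a := by
      intro a ha
      rcases eq_or_lt_of_le ha.2 with h | h
      · rw [(by norm_num : (0:ℝ)+1 = 1)] at h
        subst h
        have : ((1:ℝ) : AddCircle (1:ℝ)) = ((0:ℝ) : AddCircle (1:ℝ)) := by
          rw [show ((1:ℝ) : AddCircle (1:ℝ)) = (0 : AddCircle (1:ℝ)) by
            rw [AddCircle.coe_eq_zero_iff]; exact ⟨1, by simp⟩]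
          simp
        rw [this, AddCircle.liftIco_zero_coe_apply ⟨le_refl 0, by norm_num⟩, hend]
      · rw [AddCircle.liftIco_zero_coe_apply ⟨le_of_lt ha.1, by linarith⟩]
    rw [setIntegral_congr_fun measurableSet_Ioc hcongr]
    rw [← intervalIntegral.integral_of_le (by norm_num : (0:ℝ) ≤ 0+1)]
    rw [(by norm_num : (0:ℝ)+1 = 1)]
    rw [← intervalIntegral.integral_add_adjacent_intervals
      (hcont.intervalIntegrable 0 (1-ε)) (hcont.intervalIntegrable (1-ε) 1)]
    have hA : ∫ x in (0:ℝ)..(1-ε), f x = ∫ x in (0:ℝ)..(1-ε), x := by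
      apply intervalIntegral.integral_congr
      intro x hx
      rw [Set.uIcc_of_le (by linarith)] at hx
      apply min_eq_left
      rw [le_div_iff₀ h0]
      nlinarith [hx.1, hx.2]
    have hB : (0:ℝ) ≤ ∫ x in (1-ε)..(1:ℝ), f x := by
      rw [show (0:ℝ) = ∫ _x in (1-ε)..(1:ℝ), (0:ℝ) by simp]
      apply intervalIntegral.integral_mono_on (by linarith) intervalIntegrable_const
        (hcont.intervalIntegrable _ _)
      intro x hx
      apply le_min (by linarith [hx.1])
      apply div_nonneg (by linarith [hx.2]) (le_of_lt h0)
    have hid : ∫ x in (0:ℝ)..(1-ε), x = (1-ε)^2/2 := by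
      rw [integral_id]; ring
    rw [hA, hid]
    nlinarith [sq_nonneg ε]

/-- For irrational `α`, the Cesàro averages of the fractional parts of the integer
multiples of `α` converge to `1/2`. -/
theorem cesaro_fract_irrational (α : ℝ) (hα : Irrational α) :
    Tendsto (fun n : ℕ => (1 / (n : ℝ)) * ∑ i ∈ Finset.range n, Int.fract ((i : ℝ) * α))
      atTop (nhds (1 / 2)) := by
  rw [Metric.tendsto_atTop]
  intro ε hε
  set δ : ℝ := min (ε/4) (1/2) with hδ
  have hδ0 : 0 < δ := lt_min (by linarith) (by norm_num)
  have hδ1 : δ ≤ 1 := le_trans (min_le_right _ _) (by norm_num)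
  have hδε : 2 * δ < ε := by
    have := min_le_left (ε/4) (1/2)
    have : δ ≤ ε/4 := this
    linarith
  obtain ⟨H, hH, hHint⟩ := exists_upper hδ0 hδ1
  obtain ⟨G, hG, hGint⟩ := exists_lower hδ0 hδ1
  have hHt := tendsto_avg_cont_real hα H
  have hGt := tendsto_avg_cont_real hα G
  have hHe : ∀ᶠ n : ℕ in atTop,
      (n:ℝ)⁻¹ * ∑ i ∈ Finset.range n, H (((i:ℝ)*α : ℝ) : AddCircle (1:ℝ)) < (∫ z, H z) + δ :=
    hHt.eventually_lt_const (by linarith)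
  have hGe : ∀ᶠ n : ℕ in atTop,
      (∫ z, G z) - δ < (n:ℝ)⁻¹ * ∑ i ∈ Finset.range n, G (((i:ℝ)*α : ℝ) : AddCircle (1:ℝ)) :=
    hGt.eventually_const_lt (by linarith)
  rw [eventually_atTop] at hHe hGe
  obtain ⟨N1, hN1⟩ := hHe
  obtain ⟨N2, hN2⟩ := hGe
  refine ⟨max N1 N2, fun n hn => ?_⟩
  have hnn : (0:ℝ) ≤ (n:ℝ)⁻¹ := by positivity
  have hupper : (n:ℝ)⁻¹ * ∑ i ∈ Finset.range n, Int.fract ((i : ℝ) * α)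
      ≤ (n:ℝ)⁻¹ * ∑ i ∈ Finset.range n, H (((i:ℝ)*α : ℝ) : AddCircle (1:ℝ)) :=
    mul_le_mul_of_nonneg_left (Finset.sum_le_sum fun i _ => hH ((i:ℝ)*α)) hnn
  have hlower : (n:ℝ)⁻¹ * ∑ i ∈ Finset.range n, G (((i:ℝ)*α : ℝ) : AddCircle (1:ℝ))
      ≤ (n:ℝ)⁻¹ * ∑ i ∈ Finset.range n, Int.fract ((i : ℝ) * α) :=
    mul_le_mul_of_nonneg_left (Finset.sum_le_sum fun i _ => hG ((i:ℝ)*α)) hnn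
  have h1 := hN1 n (le_trans (le_max_left _ _) hn)
  have h2 := hN2 n (le_trans (le_max_right _ _) hn)
  rw [Real.dist_eq, one_div, abs_lt]
  constructor
  · have : 1/2 - 2*δ < (n:ℝ)⁻¹ * ∑ i ∈ Finset.range n, Int.fract ((i : ℝ) * α) := by
      calc 1/2 - 2*δ ≤ (∫ z, G z) - δ := by linarith
        _ < _ := lt_of_lt_of_le h2 hlower
    linarith
  · have : (n:ℝ)⁻¹ * ∑ i ∈ Finset.range n, Int.fract ((i : ℝ) * α) < 1/2 + 2*δ := by
      calc (n:ℝ)⁻¹ * ∑ i ∈ Finset.range n, Int.fract ((i : ℝ) * α)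
          ≤ _ := hupper
        _ < (∫ z, H z) + δ := h1
        _ ≤ 1/2 + 2*δ := by linarith
    linarith
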